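/- Let Z, L, M be objects of C. Then the three orbit sets V(Z,L;M), Hom(M,L)*_{Z[1]}, and Hom(Z,M)*_L all have the same (finite) cardinality: |V(Z,L;M)| = |Hom(M,L)*_{Z[1]}| = |Hom(Z,M)*_L|. -/

import Mathlib

open CategoryTheory CategoryTheory.Limits CategoryTheory.Pretriangulated

universe v u

section Defs

variable {C : Type u} [CategoryTheory.Category.{v} C] [Preadditive C]
  [HasZeroObject C] [HasShift C ℤ]
  [∀ i : ℤ, (CategoryTheory.shiftFunctor C i).Additive] [Pretriangulated C]

/-- `Cone(u) ≅ W`: there are morphisms completing `u` to a distinguished triangle with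
third vertex `W`. -/
def ConeIs {A B : C} (u : A ⟶ B) (W : C) : Prop :=
  ∃ (v : B ⟶ W) (w : W ⟶ A⟦(1 : ℤ)⟧), Triangle.mk u v w ∈ distTriang C

/-- `W(Z,L;M)`: the set of triples `(l,m,n)` such that
`Z --l--> M --m--> L --n--> Z[1]` is a distinguished triangle. -/
def Wset (Z L M : C) : Set ((Z ⟶ M) × (M ⟶ L) × (L ⟶ Z⟦(1 : ℤ)⟧)) :=
  {p | Triangle.mk p.1 p.2.1 p.2.2 ∈ distTriang C}

/-- The relation on `W(Z,L;M)` given by the action of `Aut Z × Aut L`: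
`(d,b) · (l,m,n) = (dl, m b⁻¹, b n (d[1])⁻¹)` (compositions written left to right);
its quotient is the orbit set `V(Z,L;M)`. -/
def relV (Z L M : C) : ↥(Wset Z L M) → ↥(Wset Z L M) → Prop := fun p p' =>
  ∃ (d : Aut Z) (b : Aut L), p'.1.1 = d.hom ≫ p.1.1 ∧ p'.1.2.1 = p.1.2.1 ≫ b.inv ∧
    p'.1.2.2 = b.hom ≫ p.1.2.2 ≫ (d.inv)⟦(1 : ℤ)⟧'

/-- The relation on `Hom(M,L)_{Z[1]}` given by the action of `Aut L`, `m ↦ m b⁻¹`;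
its quotient is the orbit set `Hom(M,L)*_{Z[1]}`. -/
def relMZ (Z L M : C) : {m : M ⟶ L // ConeIs m (Z⟦(1 : ℤ)⟧)} →
    {m : M ⟶ L // ConeIs m (Z⟦(1 : ℤ)⟧)} → Prop := fun m m' =>
  ∃ b : Aut L, (m' : M ⟶ L) = (m : M ⟶ L) ≫ b.inv

/-- The relation on `Hom(Z,M)_L` given by the action of `Aut Z`, `l ↦ d l`;
its quotient is the orbit set `Hom(Z,M)*_L`. -/
def relZM (Z L M : C) : {l : Z ⟶ M // ConeIs l L} → {l : Z ⟶ M // ConeIs l L} → Prop :=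
  fun l l' => ∃ d : Aut Z, (l' : Z ⟶ M) = d.hom ≫ (l : Z ⟶ M)

end Defs

section Aux

variable {C : Type u} [CategoryTheory.Category.{v} C] [Preadditive C]
  [HasZeroObject C] [HasShift C ℤ]
  [∀ i : ℤ, (CategoryTheory.shiftFunctor C i).Additive] [Pretriangulated C]

variable (Z L M : C)

lemma aut_one_hom (X : C) : (1 : Aut X).hom = 𝟙 X := rfl

lemma aut_one_inv (X : C) : (1 : Aut X).inv = 𝟙 X := rfl

lemma aut_inv_hom' {X : C} (f : Aut X) : (f⁻¹ : Aut X).hom = f.inv := rfl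

lemma aut_inv_inv' {X : C} (f : Aut X) : (f⁻¹ : Aut X).inv = f.hom := rfl

lemma aut_mul_hom' {X : C} (f g : Aut X) : (f * g : Aut X).hom = g.hom ≫ f.hom := rfl

lemma aut_mul_inv' {X : C} (f g : Aut X) : (f * g : Aut X).inv = f.inv ≫ g.inv := rfl

lemma aut_inv_hom_id' {X : C} (f : Aut X) : f.inv ≫ f.hom = 𝟙 X := Iso.inv_hom_id f

lemma aut_inv_hom_id_assoc' {X Y : C} (f : Aut X) (g : X ⟶ Y) : f.inv ≫ f.hom ≫ g = g :=
  Iso.inv_hom_id_assoc f g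

lemma aut_hom_inv_id_assoc' {X Y : C} (f : Aut X) (g : X ⟶ Y) : f.hom ≫ f.inv ≫ g = g :=
  Iso.hom_inv_id_assoc f g

lemma relV_equiv : Equivalence (relV Z L M) := by
  constructor
  · intro p
    exact ⟨1, 1, by simp [aut_one_hom], by simp [aut_one_inv],
      by simp [aut_one_hom, aut_one_inv]⟩
  · rintro p p' ⟨d, b, h1, h2, h3⟩
    refine ⟨d⁻¹, b⁻¹, ?_, ?_, ?_⟩
    · rw [h1]; simp [aut_inv_hom', aut_inv_inv', aut_inv_hom_id', aut_inv_hom_id_assoc']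
    · rw [h2]; simp [aut_inv_hom', aut_inv_inv', aut_inv_hom_id', aut_inv_hom_id_assoc']
    · rw [h3]; simp [aut_inv_hom', aut_inv_inv', aut_inv_hom_id', aut_inv_hom_id_assoc', ← Functor.map_comp]
  · rintro p p' p'' ⟨d, b, h1, h2, h3⟩ ⟨d', b', h1', h2', h3'⟩
    refine ⟨d * d', b * b', ?_, ?_, ?_⟩
    · rw [h1', h1]; simp [aut_mul_hom', aut_mul_inv']
    · rw [h2', h2]; simp [aut_mul_hom', aut_mul_inv']
    · rw [h3', h3]; simp [aut_mul_hom', aut_mul_inv', ← Functor.map_comp]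

lemma relMZ_equiv : Equivalence (relMZ Z L M) := by
  constructor
  · intro m; exact ⟨1, by simp [aut_one_inv]⟩
  · rintro m m' ⟨b, h⟩; exact ⟨b⁻¹, by rw [h]; simp [aut_inv_hom', aut_inv_inv', aut_inv_hom_id', aut_inv_hom_id_assoc']⟩
  · rintro m m' m'' ⟨b, h⟩ ⟨b', h'⟩
    exact ⟨b * b', by rw [h', h]; simp [aut_mul_hom', aut_mul_inv']⟩

lemma relZM_equiv : Equivalence (relZM Z L M) := by
  constructor
  · intro l; exact ⟨1, by simp [aut_one_hom]⟩
  · rintro l l' ⟨d, h⟩; exact ⟨d⁻¹, by rw [h]; simp [aut_inv_hom', aut_inv_inv', aut_inv_hom_id', aut_inv_hom_id_assoc']⟩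
  · rintro l l' l'' ⟨d, h⟩ ⟨d', h'⟩
    exact ⟨d * d', by rw [h', h]; simp [aut_mul_hom', aut_mul_inv']⟩

variable {Z L M}

/-- The `m`-component of an element of `W(Z,L;M)` has cone `Z⟦1⟧`. -/
lemma coneIs_of_mem_Wset (p : ↥(Wset Z L M)) : ConeIs p.1.2.1 (Z⟦(1 : ℤ)⟧) :=
  ⟨p.1.2.2, -(p.1.1)⟦(1 : ℤ)⟧', rot_of_distTriang _ p.2⟩

/-- The `l`-component of an element of `W(Z,L;M)` has cone `L`. -/
lemma coneIs_of_mem_Wset' (p : ↥(Wset Z L M)) : ConeIs p.1.1 L :=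
  ⟨p.1.2.1, p.1.2.2, p.2⟩

/-- The projection `W(Z,L;M) → Hom(M,L)_{Z[1]}`. -/
def projMZ (p : ↥(Wset Z L M)) : {m : M ⟶ L // ConeIs m (Z⟦(1 : ℤ)⟧)} :=
  ⟨p.1.2.1, coneIs_of_mem_Wset p⟩

/-- The projection `W(Z,L;M) → Hom(Z,M)_L`. -/
def projZM (p : ↥(Wset Z L M)) : {l : Z ⟶ M // ConeIs l L} :=
  ⟨p.1.1, coneIs_of_mem_Wset' p⟩

lemma projMZ_surjOn (m : {m : M ⟶ L // ConeIs m (Z⟦(1 : ℤ)⟧)}) :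
    ∃ p : ↥(Wset Z L M), (projMZ p).1 = m.1 := by
  obtain ⟨v, w, hT⟩ := m.2
  set T : Triangle C := Triangle.mk m.1 v w with hTdef
  set e : Z ≅ (Z⟦(1 : ℤ)⟧)⟦(-1 : ℤ)⟧ := (shiftEquiv C (1 : ℤ)).unitIso.app Z with he
  have hinv : T.invRotate ∈ distTriang C := inv_rot_of_distTriang _ hT
  have hmem : Triangle.mk (e.hom ≫ T.invRotate.mor₁) T.invRotate.mor₂
      (T.invRotate.mor₃ ≫ (e.inv)⟦(1 : ℤ)⟧') ∈ distTriang C := by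
    refine isomorphic_distinguished _ hinv _ ?_
    refine Triangle.isoMk _ _ e (Iso.refl _) (Iso.refl _) ?_ ?_ ?_
    · simp
      exact Category.comp_id _
    · simp
      exact (Category.comp_id _).trans (Category.id_comp _).symm
    · dsimp
      simp [← Functor.map_comp]
      refine Eq.trans ?_ (Category.id_comp _).symm
      have key : ∀ {Y : C} (x : Y ⟶ ((Z⟦(1 : ℤ)⟧)⟦(-1 : ℤ)⟧)⟦(1 : ℤ)⟧),
          (x ≫ (e.inv)⟦(1 : ℤ)⟧') ≫ (e.hom)⟦(1 : ℤ)⟧' = x := by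
        intro Y x
        rw [Category.assoc, ← Functor.map_comp, e.inv_hom_id, CategoryTheory.Functor.map_id, Category.comp_id]
      exact key _
  exact ⟨⟨(e.hom ≫ T.invRotate.mor₁, T.invRotate.mor₂,
    T.invRotate.mor₃ ≫ (e.inv)⟦(1 : ℤ)⟧'), hmem⟩, rfl⟩

lemma projMZ_rel {p p' : ↥(Wset Z L M)} (b : Aut L)
    (h : (projMZ p').1 = (projMZ p).1 ≫ b.inv) : relV Z L M p p' := by
  obtain ⟨⟨l, m, n⟩, hT0⟩ := p
  obtain ⟨⟨l', m', n'⟩, hT0'⟩ := p'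
  have hT : Triangle.mk l m n ∈ distTriang C := hT0
  have hT' : Triangle.mk l' m' n' ∈ distTriang C := hT0'
  replace h : m' = m ≫ b.inv := h
  obtain ⟨a, ha1, ha2⟩ : ∃ a : Z ⟶ Z, l ≫ 𝟙 M = a ≫ l' ∧ n ≫ a⟦(1 : ℤ)⟧' = b.inv ≫ n' :=
    complete_distinguished_triangle_morphism₁
    (Triangle.mk l m n) (Triangle.mk l' m' n') hT hT' (𝟙 M) b.inv
    (by rw [h]; exact (Category.id_comp _).symm)
  rw [Category.comp_id] at ha1
  have : IsIso a := by
    have := isIso₁_of_isIso₂₃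
      ({ hom₁ := a, hom₂ := 𝟙 M, hom₃ := b.inv,
         comm₁ := by exact (Category.comp_id _).trans ha1,
         comm₂ := by rw [h]; exact (Category.id_comp _).symm,
         comm₃ := by exact ha2 } :
        Triangle.mk l m n ⟶ Triangle.mk l' m' n') hT hT'
      (IsIso.id M) (Iso.isIso_inv (X := L) (Y := L) b)
    exact this
  refine ⟨(asIso a).symm, b, ?_, h, ?_⟩
  · show l' = inv a ≫ l
    rw [ha1, IsIso.inv_hom_id_assoc]
  · show n' = b.hom ≫ n ≫ a⟦(1 : ℤ)⟧'
    rw [ha2]; exact (aut_hom_inv_id_assoc' b n').symm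

lemma projZM_rel {p p' : ↥(Wset Z L M)} (d : Aut Z)
    (h : (projZM p').1 = d.hom ≫ (projZM p).1) : relV Z L M p p' := by
  obtain ⟨⟨l, m, n⟩, hT0⟩ := p
  obtain ⟨⟨l', m', n'⟩, hT0'⟩ := p'
  have hT : Triangle.mk l m n ∈ distTriang C := hT0
  have hT' : Triangle.mk l' m' n' ∈ distTriang C := hT0'
  replace h : l' = d.hom ≫ l := h
  obtain ⟨c, hc1, hc2⟩ : ∃ c : L ⟶ L, m ≫ c = 𝟙 M ≫ m' ∧ n ≫ d.inv⟦(1 : ℤ)⟧' = c ≫ n' :=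
    complete_distinguished_triangle_morphism
    (Triangle.mk l m n) (Triangle.mk l' m' n') hT hT' d.inv (𝟙 M)
    (by rw [h]; exact (Category.comp_id _).trans (aut_inv_hom_id_assoc' d l).symm)
  rw [Category.id_comp] at hc1
  have : IsIso c := by
    have := isIso₃_of_isIso₁₂
      ({ hom₁ := d.inv, hom₂ := 𝟙 M, hom₃ := c,
         comm₁ := by rw [h]; exact (Category.comp_id _).trans (aut_inv_hom_id_assoc' d l).symm,
         comm₂ := by exact hc1.trans (Category.id_comp _).symm,
         comm₃ := by exact hc2 } :
        Triangle.mk l m n ⟶ Triangle.mk l' m' n') hT hT'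
      (Iso.isIso_inv (X := Z) (Y := Z) d) (IsIso.id M)
    exact this
  refine ⟨d, (asIso c).symm, h, ?_, ?_⟩
  · exact hc1.symm
  · show n' = inv c ≫ n ≫ (d.inv)⟦(1 : ℤ)⟧'
    rw [hc2, IsIso.inv_hom_id_assoc]

end Aux

/-- `|V(Z,L;M)| = |Hom(M,L)*_{Z[1]}| = |Hom(Z,M)*_L|`. -/
theorem stmt6 {k : Type*} [Field k] [Finite k]
    {C : Type u} [CategoryTheory.Category.{v} C] [Preadditive C] [CategoryTheory.Linear k C]
    [HasZeroObject C] [HasBinaryBiproducts C] [HasShift C ℤ]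
    [∀ i : ℤ, (CategoryTheory.shiftFunctor C i).Additive] [Pretriangulated C]
    [∀ X Y : C, FiniteDimensional k (X ⟶ Y)]
    (hloc : ∀ X : C, Indecomposable X → IsLocalRing (CategoryTheory.End X))
    (Z L M : C) :
    Nat.card (Quot (relV Z L M)) = Nat.card (Quot (relMZ Z L M)) ∧
    Nat.card (Quot (relV Z L M)) = Nat.card (Quot (relZM Z L M)) := by
  constructor
  · -- `|V| = |Hom(M,L)*_{Z[1]}|`
    have hresp : ∀ p p' : ↥(Wset Z L M), relV Z L M p p' →
        (Quot.mk (relMZ Z L M) (projMZ p)) = Quot.mk (relMZ Z L M) (projMZ p') := by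
      rintro p p' ⟨d, b, h1, h2, h3⟩
      exact Quot.sound ⟨b, h2⟩
    refine Nat.card_eq_of_bijective
      (Quot.lift (fun p => Quot.mk (relMZ Z L M) (projMZ p)) hresp) ⟨?_, ?_⟩
    · intro x y
      induction x using Quot.ind with | _ p =>
      induction y using Quot.ind with | _ p' =>
      intro h
      simp only [Quot.lift_mk] at h
      rw [Quot.eq, (relMZ_equiv Z L M).eqvGen_iff] at h
      obtain ⟨b, hb⟩ := h
      exact Quot.sound (projMZ_rel b hb)
    · intro y
      induction y using Quot.ind with | _ m =>
      obtain ⟨p, hp⟩ := projMZ_surjOn m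
      exact ⟨Quot.mk _ p, by simp only [Quot.lift_mk]; congr 1; exact Subtype.ext hp⟩
  · -- `|V| = |Hom(Z,M)*_L|`
    have hresp : ∀ p p' : ↥(Wset Z L M), relV Z L M p p' →
        (Quot.mk (relZM Z L M) (projZM p)) = Quot.mk (relZM Z L M) (projZM p') := by
      rintro p p' ⟨d, b, h1, h2, h3⟩
      exact Quot.sound ⟨d, h1⟩
    refine Nat.card_eq_of_bijective
      (Quot.lift (fun p => Quot.mk (relZM Z L M) (projZM p)) hresp) ⟨?_, ?_⟩
    · intro x y
      induction x using Quot.ind with | _ p =>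
      induction y using Quot.ind with | _ p' =>
      intro h
      simp only [Quot.lift_mk] at h
      rw [Quot.eq, (relZM_equiv Z L M).eqvGen_iff] at h
      obtain ⟨d, hd⟩ := h
      exact Quot.sound (projZM_rel d hd)
    · intro y
      induction y using Quot.ind with | _ l =>
      obtain ⟨v, w, hT⟩ := l.2
      exact ⟨Quot.mk _ ⟨(l.1, v, w), hT⟩, by
        simp only [Quot.lift_mk]; congr 1⟩
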